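/- Let Z be a nonempty set and D the complete metric space of bounded functions Z → ℝ with the sup-norm distance. Fix ρ > 0 and τ > 0. Let Φ : D → D satisfy ‖Φ(V) − Φ(W)‖∞ ≤ e^{−ρτ} · ‖V − W‖∞ for all V, W ∈ D, with fixed point V⋆ = Φ(V⋆). Let H : D → D, p > 1, C_DP ≥ 0, γ > 0, C_H ≥ 0, and let F assign to each u ∈ (0,1] a map F(u) : D → D, such that: (i) ‖Φ(V) − (V + τ·H(V))‖∞ ≤ C_DP · τ^p for all V ∈ D; (ii) ‖F(u)(V) − H(V)‖∞ ≤ C_H · u^γ for all u ∈ (0,1] and V ∈ D; (iii) μ is a probability measure on (0,1] and, for each V ∈ D and z ∈ Z, the map u ↦ F(u)(V)(z) is measurable. Define T̃(V) := V + τ·( z ↦ ∫_{(0,1]} F(u)(V)(z) dμ(u) ) and iterates Ṽ_{k+1} := T̃(Ṽ_k) from any Ṽ_0 ∈ D. Then T̃ maps D to D, and for all k ≥ 0, ‖Ṽ_k − V⋆‖∞ ≤ e^{−ρτk} · ‖Ṽ_0 − V⋆‖∞ + ( C_DP·τ^p + τ·C_H·∫_{(0,1]} u^γ dμ(u) ) /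 ( 1 − e^{−ρτ} ). -/
import Mathlib


open MeasureTheory

/-- Sup-norm of a real-valued function. -/
noncomputable def supNorm {Z : Type*} (f : Z → ℝ) : ℝ := ⨆ z, |f z|

/-- A real-valued function is bounded. -/
def IsBdd {Z : Type*} (f : Z → ℝ) : Prop := ∃ C, ∀ z, |f z| ≤ C

lemma supNorm_le_of {Z : Type*} [Nonempty Z] {f : Z → ℝ} {C : ℝ}
    (h : ∀ z, |f z| ≤ C) : supNorm f ≤ C := ciSup_le h

theorem stmt17 {Z : Type*} [Nonempty Z]
    (ρ τ : ℝ) (hρ : 0 < ρ) (hτ : 0 < τ)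
    (Φ : (Z → ℝ) → (Z → ℝ))
    (hΦmap : ∀ V : Z → ℝ, IsBdd V → IsBdd (Φ V))
    (hΦcontr : ∀ V W : Z → ℝ, IsBdd V → IsBdd W → ∀ z : Z,
        |Φ V z - Φ W z| ≤ Real.exp (-(ρ * τ)) * supNorm (fun z => V z - W z))
    (Vstar : Z → ℝ) (hVstarb : IsBdd Vstar) (hfix : Φ Vstar = Vstar)
    (H : (Z → ℝ) → (Z → ℝ)) (hHmap : ∀ V : Z → ℝ, IsBdd V → IsBdd (H V))
    (p : ℝ) (hp : 1 < p) (C_DP : ℝ) (hCDP : 0 ≤ C_DP)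
    (γ : ℝ) (hγ : 0 < γ) (C_H : ℝ) (hCH : 0 ≤ C_H)
    (F : Set.Ioc (0 : ℝ) 1 → (Z → ℝ) → (Z → ℝ))
    (hFmap : ∀ (u : Set.Ioc (0 : ℝ) 1) (V : Z → ℝ), IsBdd V → IsBdd (F u V))
    (hi : ∀ V : Z → ℝ, IsBdd V → ∀ z : Z,
        |Φ V z - (V z + τ * H V z)| ≤ C_DP * τ ^ p)
    (hii : ∀ (u : Set.Ioc (0 : ℝ) 1) (V : Z → ℝ), IsBdd V → ∀ z : Z,
        |F u V z - H V z| ≤ C_H * (u : ℝ) ^ γ)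
    (μ : Measure (Set.Ioc (0 : ℝ) 1)) [IsProbabilityMeasure μ]
    (hmeas : ∀ V : Z → ℝ, IsBdd V → ∀ z : Z,
        Measurable (fun u : Set.Ioc (0 : ℝ) 1 => F u V z))
    (Vt : ℕ → Z → ℝ) (hVt0 : IsBdd (Vt 0))
    (hVt : ∀ (k : ℕ) (z : Z),
        Vt (k + 1) z = Vt k z + τ * ∫ u, F u (Vt k) z ∂μ) :
    (∀ V : Z → ℝ, IsBdd V → IsBdd (fun z => V z + τ * ∫ u, F u V z ∂μ)) ∧
    ∀ k : ℕ, supNorm (fun z => Vt k z - Vstar z)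
      ≤ Real.exp (-(ρ * τ * k)) * supNorm (fun z => Vt 0 z - Vstar z)
        + (C_DP * τ ^ p + τ * C_H * ∫ u : Set.Ioc (0 : ℝ) 1, (u : ℝ) ^ γ ∂μ)
          / (1 - Real.exp (-(ρ * τ))) := by
  classical
  set q : ℝ := Real.exp (-(ρ * τ)) with hqdef
  have hq0 : 0 < q := Real.exp_pos _
  have hq1 : q < 1 := by
    rw [hqdef]
    exact Real.exp_lt_one_iff.mpr (by nlinarith)
  set I : ℝ := ∫ u : Set.Ioc (0 : ℝ) 1, (u : ℝ) ^ γ ∂μ with hIdef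
  have hγmeas : Measurable (fun u : Set.Ioc (0 : ℝ) 1 => (u : ℝ) ^ γ) :=
    (continuous_subtype_val.rpow_const (fun x => Or.inr hγ.le)).measurable
  have hγbd : ∀ u : Set.Ioc (0 : ℝ) 1, ‖(u : ℝ) ^ γ‖ ≤ 1 := by
    intro u
    rw [Real.norm_eq_abs, abs_of_nonneg (Real.rpow_nonneg u.2.1.le γ)]
    exact Real.rpow_le_one u.2.1.le u.2.2 hγ.le
  have hγint : Integrable (fun u : Set.Ioc (0 : ℝ) 1 => (u : ℝ) ^ γ) μ :=
    Integrable.mono' (integrable_const 1) hγmeas.aestronglyMeasurable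
      (ae_of_all _ hγbd)
  have hI0 : 0 ≤ I := integral_nonneg fun u => Real.rpow_nonneg u.2.1.le γ
  set ε : ℝ := C_DP * τ ^ p + τ * C_H * I with hεdef
  have hτp : 0 ≤ τ ^ p := Real.rpow_nonneg hτ.le p
  have hε0 : 0 ≤ ε := by
    have h1 : 0 ≤ C_DP * τ ^ p := mul_nonneg hCDP hτp
    have h2 : 0 ≤ τ * C_H * I := mul_nonneg (mul_nonneg hτ.le hCH) hI0
    linarith
  -- key one-step estimate
  have key : ∀ V : Z → ℝ, IsBdd V → ∀ z : Z,
      |(V z + τ * ∫ u, F u V z ∂μ) - Vstar z|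
        ≤ q * supNorm (fun z => V z - Vstar z) + ε := by
    intro V hV z
    obtain ⟨CHV, hCHV⟩ := hHmap V hV
    have hm := hmeas V hV z
    have hbound : ∀ u : Set.Ioc (0 : ℝ) 1, ‖F u V z‖ ≤ CHV + C_H := by
      intro u
      have h1 := hii u V hV z
      have h2 : C_H * (u : ℝ) ^ γ ≤ C_H := by
        have := Real.rpow_le_one u.2.1.le u.2.2 hγ.le
        nlinarith [Real.rpow_nonneg u.2.1.le γ]
      have h3 : |F u V z| ≤ |F u V z - H V z| + |H V z| := by
        calc |F u V z| = |(F u V z - H V z) + H V z| := by ring_nf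
          _ ≤ |F u V z - H V z| + |H V z| := abs_add_le _ _
      rw [Real.norm_eq_abs]
      linarith [hCHV z]
    have hint : Integrable (fun u => F u V z) μ :=
      Integrable.mono' (integrable_const (CHV + C_H)) hm.aestronglyMeasurable
        (ae_of_all _ hbound)
    have hsub : Integrable (fun u => F u V z - H V z) μ :=
      hint.sub (integrable_const _)
    have hdiff : |(∫ u, F u V z ∂μ) - H V z| ≤ C_H * I := by
      have heq : (∫ u, F u V z ∂μ) - H V z
          = ∫ u, (F u V z - H V z) ∂μ := by
        rw [integral_sub hint (integrable_const _), integral_const]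
        simp
      rw [heq]
      calc |∫ u, (F u V z - H V z) ∂μ|
          ≤ ∫ u, |F u V z - H V z| ∂μ := by
            simpa [Real.norm_eq_abs] using
              norm_integral_le_integral_norm (μ := μ) (fun u => F u V z - H V z)
        _ ≤ ∫ u : Set.Ioc (0 : ℝ) 1, C_H * (u : ℝ) ^ γ ∂μ :=
            integral_mono hsub.abs (hγint.const_mul C_H) (fun u => hii u V hV z)
        _ = C_H * I := by rw [integral_const_mul]
    have hΦc : |Φ V z - Vstar z| ≤ q * supNorm (fun z => V z - Vstar z) := by
      have := hΦcontr V Vstar hV hVstarb z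
      rwa [hfix] at this
    have h4 : |(V z + τ * ∫ u, F u V z ∂μ) - Φ V z|
        ≤ C_DP * τ ^ p + τ * (C_H * I) := by
      have h5 : (V z + τ * ∫ u, F u V z ∂μ) - Φ V z
          = -(Φ V z - (V z + τ * H V z)) + τ * ((∫ u, F u V z ∂μ) - H V z) := by
        ring
      rw [h5]
      calc |-(Φ V z - (V z + τ * H V z)) + τ * ((∫ u, F u V z ∂μ) - H V z)|
          ≤ |-(Φ V z - (V z + τ * H V z))| + |τ * ((∫ u, F u V z ∂μ) - H V z)| :=
            abs_add_le _ _
        _ ≤ C_DP * τ ^ p + τ * (C_H * I) := by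
            rw [abs_neg, abs_mul, abs_of_pos hτ]
            exact add_le_add (hi V hV z)
              (mul_le_mul_of_nonneg_left hdiff hτ.le)
    calc |(V z + τ * ∫ u, F u V z ∂μ) - Vstar z|
        ≤ |(V z + τ * ∫ u, F u V z ∂μ) - Φ V z| + |Φ V z - Vstar z| :=
          abs_sub_le _ _ _
      _ ≤ (C_DP * τ ^ p + τ * (C_H * I)) + q * supNorm (fun z => V z - Vstar z) :=
          add_le_add h4 hΦc
      _ = q * supNorm (fun z => V z - Vstar z) + ε := by rw [hεdef]; ring
  obtain ⟨Cs, hCs⟩ := hVstarb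
  -- boundedness of the averaged operator
  have hTmap : ∀ V : Z → ℝ, IsBdd V →
      IsBdd (fun z => V z + τ * ∫ u, F u V z ∂μ) := by
    intro V hV
    obtain ⟨CV, hCV⟩ := hV
    have hsup : supNorm (fun z => V z - Vstar z) ≤ CV + Cs :=
      supNorm_le_of fun z => (abs_sub (V z) (Vstar z)).trans
        (add_le_add (hCV z) (hCs z))
    refine ⟨q * (CV + Cs) + ε + Cs, fun z => ?_⟩
    have h1 : |V z + τ * ∫ u, F u V z ∂μ|
        ≤ |(V z + τ * ∫ u, F u V z ∂μ) - Vstar z| + |Vstar z| := by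
      calc |V z + τ * ∫ u, F u V z ∂μ|
          = |((V z + τ * ∫ u, F u V z ∂μ) - Vstar z) + Vstar z| := by ring_nf
        _ ≤ _ := abs_add_le _ _
    have h2 := key V ⟨CV, hCV⟩ z
    have h3 : q * supNorm (fun z => V z - Vstar z) ≤ q * (CV + Cs) :=
      mul_le_mul_of_nonneg_left hsup hq0.le
    linarith [hCs z]
  refine ⟨hTmap, ?_⟩
  have hVtb : ∀ k : ℕ, IsBdd (Vt k) := by
    intro k
    induction k with
    | zero => exact hVt0
    | succ k ih =>
      have heq : Vt (k + 1) = fun z => Vt k z + τ * ∫ u, F u (Vt k) z ∂μ :=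
        funext (hVt k)
      rw [heq]; exact hTmap _ ih
  intro k
  induction k with
  | zero =>
    simp only [Nat.cast_zero, mul_zero, neg_zero, Real.exp_zero, one_mul]
    have h0 : 0 ≤ ε / (1 - q) := div_nonneg hε0 (by linarith)
    linarith
  | succ k ih =>
    have hstep : supNorm (fun z => Vt (k + 1) z - Vstar z)
        ≤ q * supNorm (fun z => Vt k z - Vstar z) + ε := by
      apply supNorm_le_of
      intro z
      rw [hVt k z]
      exact key (Vt k) (hVtb k) z
    have hexp : Real.exp (-(ρ * τ * ((k : ℝ) + 1))) = q * Real.exp (-(ρ * τ * k)) := by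
      rw [hqdef, ← Real.exp_add]
      ring_nf
    push_cast
    rw [hexp]
    have h6 : q * supNorm (fun z => Vt k z - Vstar z)
        ≤ q * (Real.exp (-(ρ * τ * k)) * supNorm (fun z => Vt 0 z - Vstar z)
          + ε / (1 - q)) := mul_le_mul_of_nonneg_left ih hq0.le
    have h7 : q * (ε / (1 - q)) + ε = ε / (1 - q) := by
      have h1q : (1 : ℝ) - q ≠ 0 := by linarith
      field_simp
      ring
    nlinarith [hstep]
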